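/- Let a, b, n, m be positive integers with 3 ≤ n ≤ m. Let η be the greatest integer with n − η·a ≥ 1 and θ the greatest integer with m − θ·a ≥ 1, and assume η ≥ 1 and θ ≥ 1. Let b_1, …, b_η and c_1, …, c_θ be complex numbers, and define in ℂ[[x,y]]: g_2 = n·y^{n−1} + Σ_{j=1}^{η} (n − j a)·b_j·x^{j b}·y^{n − j a − 1} and g_3 = m·y^{m−1} + Σ_{j=1}^{θ} (m − j a)·c_j·x^{j b}·y^{m − j a − 1}. If the quotient ℂ[[x,y]]/(g_2, g_3) is a finite-dimensional ℂ-vector space, then either (b_η ≠ 0 and n − η·a = 1) or (c_θ ≠ 0 and m − θ·a = 1). -/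

import Mathlib

open MvPowerSeries

lemma divY (a b n η : ℕ) (ha : 0 < a) (hn2 : 2 ≤ n) (hηn : η * a + 1 ≤ n)
    (bc : ℕ → ℂ) (hneg : ¬(bc η ≠ 0 ∧ n - η * a = 1)) :
    (X 1 : MvPowerSeries (Fin 2) ℂ) ∣ C (σ := Fin 2) (R := ℂ) (n : ℂ) * X 1 ^ (n - 1) +
      ∑ j ∈ Finset.Icc 1 η,
        C (σ := Fin 2) (R := ℂ) (((n - j * a : ℕ) : ℂ) * bc j) * X 0 ^ (j * b) * X 1 ^ (n - j * a - 1) := by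
  apply dvd_add
  · exact Dvd.dvd.mul_left (dvd_pow_self _ (by omega)) _
  · apply Finset.dvd_sum
    intro j hj
    simp only [Finset.mem_Icc] at hj
    have hja : j * a ≤ η * a := Nat.mul_le_mul_right a hj.2
    by_cases hc : n - j * a - 1 = 0
    · have h1 : n - j * a = 1 := by omega
      have hjη : j = η := by
        have : η ≤ j := Nat.le_of_mul_le_mul_right (by omega) ha
        omega
      subst hjη
      have hbc : bc j = 0 := by
        by_contra hbc
        exact hneg ⟨hbc, h1⟩
      simp [hbc]
    · exact Dvd.dvd.mul_left (dvd_pow_self _ hc) _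

theorem stmt3 (a b n m η θ : ℕ) (ha : 0 < a) (hb : 0 < b)
    (hn : 3 ≤ n) (hnm : n ≤ m) (hη : 1 ≤ η) (hθ : 1 ≤ θ)
    (hηn : η * a + 1 ≤ n) (hηmax : n ≤ (η + 1) * a)
    (hθm : θ * a + 1 ≤ m) (hθmax : m ≤ (θ + 1) * a)
    (bc : ℕ → ℂ) (cc : ℕ → ℂ)
    (g₂ g₃ : MvPowerSeries (Fin 2) ℂ)
    (hg₂ : g₂ = C (σ := Fin 2) (R := ℂ) (n : ℂ) * X 1 ^ (n - 1) +
      ∑ j ∈ Finset.Icc 1 η,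
        C (σ := Fin 2) (R := ℂ) (((n - j * a : ℕ) : ℂ) * bc j) * X 0 ^ (j * b) * X 1 ^ (n - j * a - 1))
    (hg₃ : g₃ = C (σ := Fin 2) (R := ℂ) (m : ℂ) * X 1 ^ (m - 1) +
      ∑ j ∈ Finset.Icc 1 θ,
        C (σ := Fin 2) (R := ℂ) (((m - j * a : ℕ) : ℂ) * cc j) * X 0 ^ (j * b) * X 1 ^ (m - j * a - 1))
    (hfin : FiniteDimensional ℂ (MvPowerSeries (Fin 2) ℂ ⧸ Ideal.span {g₂, g₃})) :
    (bc η ≠ 0 ∧ n - η * a = 1) ∨ (cc θ ≠ 0 ∧ m - θ * a = 1) := by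
  by_contra h
  rw [not_or] at h
  obtain ⟨h2, h3⟩ := h
  set J : Ideal (MvPowerSeries (Fin 2) ℂ) := Ideal.span {g₂, g₃} with hJ
  have hle : J ≤ Ideal.span {(X 1 : MvPowerSeries (Fin 2) ℂ)} := by
    rw [hJ, Ideal.span_le]
    intro f hf
    simp only [Set.mem_insert_iff, Set.mem_singleton_iff] at hf
    rcases hf with rfl | rfl
    · rw [SetLike.mem_coe, Ideal.mem_span_singleton, hg₂]
      exact divY a b n η ha (by omega) hηn bc h2
    · rw [SetLike.mem_coe, Ideal.mem_span_singleton, hg₃]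
      exact divY a b m θ ha (by omega) hθm cc h3
  have li : LinearIndependent ℂ
      (fun k : ℕ => (Ideal.Quotient.mk J) ((X 0 : MvPowerSeries (Fin 2) ℂ) ^ k)) := by
    rw [linearIndependent_iff']
    intro s g hsum i hi
    have hmem : (∑ k ∈ s, g k • ((X 0 : MvPowerSeries (Fin 2) ℂ) ^ k)) ∈ J := by
      rw [← Ideal.Quotient.eq_zero_iff_mem]
      have : (Ideal.Quotient.mkₐ ℂ J) (∑ k ∈ s, g k • ((X 0 : MvPowerSeries (Fin 2) ℂ) ^ k))
          = ∑ k ∈ s, g k • (Ideal.Quotient.mk J) ((X 0 : MvPowerSeries (Fin 2) ℂ) ^ k) := by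
        rw [map_sum]
        simp [Ideal.Quotient.mkₐ_eq_mk]
      rw [Ideal.Quotient.mkₐ_eq_mk] at this
      rw [this, hsum]
    have hdvd : (X 1 : MvPowerSeries (Fin 2) ℂ) ∣
        ∑ k ∈ s, g k • ((X 0 : MvPowerSeries (Fin 2) ℂ) ^ k) := by
      rw [← Ideal.mem_span_singleton]
      exact hle hmem
    have hcoeff := (X_dvd_iff.mp hdvd) (Finsupp.single 0 i)
      (by simp [Finsupp.single_apply])
    rw [map_sum] at hcoeff
    have : ∀ k ∈ s, (coeff (R := ℂ) (Finsupp.single 0 i))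
        (g k • ((X 0 : MvPowerSeries (Fin 2) ℂ) ^ k)) =
        if Finsupp.single (0 : Fin 2) i = Finsupp.single (0 : Fin 2) k then g k else 0 := by
      intro k _
      rw [map_smul, coeff_X_pow]
      simp [mul_ite]
    rw [Finset.sum_congr rfl this] at hcoeff
    rw [Finset.sum_eq_single i (fun k _ hk => by
        rw [if_neg (fun hh => hk ((Finsupp.single_injective (0 : Fin 2)) hh).symm)])
      (fun hh => absurd hi hh)] at hcoeff
    rw [if_pos rfl] at hcoeff
    exact hcoeff
  exact Module.Finite.not_linearIndependent_of_infinite _ li
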